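/- arXiv:2212.08176 — 2 statements merged into one kernel-verified Lean document; each statement's English description precedes it below -/
import Mathlib

section
/- Let f, g ∈ B^θ_{p,∞}(ℝ^d) ∩ B^β_{p',∞}(ℝ^d) appropriately, with θ, β ∈ (0,1). For a standard mollifier ρ_ε, the Constantin–E–Titi commutator satisfies ‖(fg)_ε − f_ε g_ε‖_{L^q} ≤ C ε^{θ+β} [f]_{B^θ_{rq,∞}} [g]_{B^β_{r'q,∞}} for any q, r ∈ [1,∞] with 1/r + 1/r' = 1 and rq, r'q ≥ 1. -/
open MeasureTheory Set Filter
open scoped ENNReal Topology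

noncomputable section

/-- The rescaled mollification kernel `ρ_ε(y) = ε^{-d} ρ(y/ε)`. -/
def mollKer (d : ℕ) (ρ : EuclideanSpace ℝ (Fin d) → ℝ) (ε : ℝ)
    (y : EuclideanSpace ℝ (Fin d)) : ℝ :=
  ε ^ (-(d : ℝ)) * ρ (ε⁻¹ • y)

/-- Mollification `f_ε = f * ρ_ε`. -/
def mollify (d : ℕ) (ρ : EuclideanSpace ℝ (Fin d) → ℝ) (ε : ℝ)
    (f : EuclideanSpace ℝ (Fin d) → ℝ) (x : EuclideanSpace ℝ (Fin d)) : ℝ :=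
  ∫ y, f (x - y) * mollKer d ρ ε y

section Aux

variable {X Y : Type*} [MeasurableSpace X] [MeasurableSpace Y]
  {μ : Measure X} {ν : Measure Y}

/-- Jensen's inequality for `t ↦ t^p` over a probability measure, via Hölder. -/
lemma jensen_prob [IsProbabilityMeasure ν] {p : ℝ} (hp : 1 ≤ p) {g : Y → ℝ≥0∞}
    (hg : Measurable g) : (∫⁻ y, g y ∂ν) ^ p ≤ ∫⁻ y, g y ^ p ∂ν := by
  rcases eq_or_lt_of_le hp with h1 | h1
  · simp [← h1]
  · have hpq : p.HolderConjugate p.conjExponent := Real.HolderConjugate.conjExponent h1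
    have h2 : ∫⁻ y, g y ∂ν ≤ (∫⁻ y, g y ^ p ∂ν) ^ (1 / p) := by
      have h3 := ENNReal.lintegral_mul_le_Lp_mul_Lq ν hpq hg.aemeasurable
        (measurable_const (a := (1 : ℝ≥0∞))).aemeasurable
      simpa using h3
    calc (∫⁻ y, g y ∂ν) ^ p ≤ ((∫⁻ y, g y ^ p ∂ν) ^ (1 / p)) ^ p :=
          ENNReal.rpow_le_rpow h2 (by positivity)
    _ = ∫⁻ y, g y ^ p ∂ν := by
        rw [← ENNReal.rpow_mul, one_div_mul_cancel (by positivity), ENNReal.rpow_one]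

/-- Minkowski-type bound: if for a.e. `y` the `L^q(μ)` norm of `H (·, y)` is at most `C`,
and `ν` is a probability measure, then the `L^q(μ)` norm of `x ↦ ∫ y, H x y ∂ν` is
at most `C`. -/
lemma mink [SFinite μ] [IsProbabilityMeasure ν] {q : ℝ≥0∞} (hq : 1 ≤ q) {H : X → Y → ℝ}
    (hH : AEMeasurable (Function.uncurry H) (μ.prod ν)) {C : ℝ≥0∞}
    (hC : ∀ᵐ y ∂ν, eLpNorm (fun x => H x y) q μ ≤ C) :
    eLpNorm (fun x => ∫ y, H x y ∂ν) q μ ≤ C := by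
  obtain ⟨φ, hφm, hφe⟩ := hH
  set ψ : X × Y → ℝ≥0∞ := fun z => (‖φ z‖₊ : ℝ≥0∞) with hψ_def
  have hψm : Measurable ψ := hφm.nnnorm.coe_nnreal_ennreal
  have h1 : ∀ᵐ x ∂μ, ∀ᵐ y ∂ν, H x y = φ (x, y) := Measure.ae_ae_of_ae_prod hφe
  have h2 : ∀ᵐ y ∂ν, ∀ᵐ x ∂μ, H x y = φ (x, y) := by
    have h3 := (Measure.measurePreserving_swap (μ := ν)
      (ν := μ)).quasiMeasurePreserving.ae_eq_comp hφe
    exact Measure.ae_ae_of_ae_prod h3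
  have hC' : ∀ᵐ y ∂ν, eLpNorm (fun x => φ (x, y)) q μ ≤ C := by
    filter_upwards [hC, h2] with y h h'
    calc eLpNorm (fun x => φ (x, y)) q μ
        = eLpNorm (fun x => H x y) q μ :=
          eLpNorm_congr_ae (by filter_upwards [h'] with x hx using hx.symm)
    _ ≤ C := h
  have key : ∀ᵐ x ∂μ, (‖∫ y, H x y ∂ν‖₊ : ℝ≥0∞) ≤ ∫⁻ y, ψ (x, y) ∂ν := by
    filter_upwards [h1] with x hx
    refine (enorm_integral_le_lintegral_enorm _).trans (le_of_eq (lintegral_congr_ae ?_))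
    filter_upwards [hx] with y hy
    simp [hψ_def, hy]; rfl
  rcases eq_top_or_lt_top q with hqt | hqt
  · -- q = ∞
    have hae : ∀ᵐ y ∂ν, ∀ᵐ x ∂μ, ψ (x, y) ≤ C := by
      filter_upwards [hC'] with y h
      have h4 := enorm_ae_le_eLpNormEssSup (fun x => φ (x, y)) μ
      rw [hqt, eLpNorm_exponent_top] at h
      filter_upwards [h4] with x hx using hx.trans h
    have hS : ∀ᵐ z ∂μ.prod ν, ψ z ≤ C := by
      rw [ae_iff]
      have hSm : MeasurableSet {z : X × Y | ¬ ψ z ≤ C} :=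
        (measurableSet_le hψm measurable_const).compl
      rw [Measure.prod_apply_symm hSm]
      have h5 : ∀ᵐ y ∂ν, μ ((fun x => (x, y)) ⁻¹' {z : X × Y | ¬ ψ z ≤ C}) = 0 := by
        filter_upwards [hae] with y h
        exact h
      rw [lintegral_congr_ae h5, lintegral_zero]
    have hae2 : ∀ᵐ x ∂μ, ∀ᵐ y ∂ν, ψ (x, y) ≤ C := Measure.ae_ae_of_ae_prod hS
    have hGb : ∀ᵐ x ∂μ, (‖∫ y, H x y ∂ν‖₊ : ℝ≥0∞) ≤ C := by
      filter_upwards [key, hae2] with x hx1 hx2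
      refine hx1.trans ?_
      calc ∫⁻ y, ψ (x, y) ∂ν ≤ ∫⁻ _, C ∂ν := lintegral_mono_ae hx2
      _ = C := by simp
    rw [hqt, eLpNorm_exponent_top]
    exact essSup_le_of_ae_le C hGb
  · -- q < ∞
    have hq0 : q ≠ 0 := (zero_lt_one.trans_le hq).ne'
    have hqt' : q ≠ ∞ := hqt.ne
    set p := q.toReal with hp_def
    have hp1 : 1 ≤ p := by
      rw [hp_def, ← ENNReal.toReal_one]
      exact ENNReal.toReal_mono hqt' hq
    have hp0 : 0 < p := zero_lt_one.trans_le hp1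
    rw [eLpNorm_eq_lintegral_rpow_enorm_toReal hq0 hqt']
    have step1 : ∫⁻ x, (‖∫ y, H x y ∂ν‖₊ : ℝ≥0∞) ^ p ∂μ
        ≤ ∫⁻ x, ∫⁻ y, ψ (x, y) ^ p ∂ν ∂μ := by
      refine lintegral_mono_ae ?_
      filter_upwards [key] with x hx
      calc (‖∫ y, H x y ∂ν‖₊ : ℝ≥0∞) ^ p ≤ (∫⁻ y, ψ (x, y) ∂ν) ^ p :=
            ENNReal.rpow_le_rpow hx hp0.le
      _ ≤ ∫⁻ y, ψ (x, y) ^ p ∂ν := jensen_prob hp1 (hψm.comp measurable_prodMk_left)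
    have step2 : ∫⁻ x, ∫⁻ y, ψ (x, y) ^ p ∂ν ∂μ = ∫⁻ y, ∫⁻ x, ψ (x, y) ^ p ∂μ ∂ν :=
      lintegral_lintegral_swap (hψm.pow_const p).aemeasurable
    have step3 : ∫⁻ y, ∫⁻ x, ψ (x, y) ^ p ∂μ ∂ν ≤ ∫⁻ _, C ^ p ∂ν := by
      refine lintegral_mono_ae ?_
      filter_upwards [hC'] with y h
      have h6 := ENNReal.rpow_le_rpow h hp0.le
      rwa [eLpNorm_eq_lintegral_rpow_enorm_toReal hq0 hqt', ← ENNReal.rpow_mul,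
        one_div_mul_cancel hp0.ne', ENNReal.rpow_one] at h6
    calc (∫⁻ x, (‖∫ y, H x y ∂ν‖₊ : ℝ≥0∞) ^ p ∂μ) ^ (1 / p) ≤ (C ^ p) ^ (1 / p) := by
          refine ENNReal.rpow_le_rpow ?_ (by positivity)
          refine (step1.trans_eq step2).trans (step3.trans_eq ?_)
          simp
    _ = C := by rw [← ENNReal.rpow_mul, mul_one_div_cancel hp0.ne', ENNReal.rpow_one]

end Aux

/-- Core of the Constantin–E–Titi commutator estimate, for measurable representatives. -/
theorem coreCET (d : ℕ) (ρ : EuclideanSpace ℝ (Fin d) → ℝ)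
    (hρ_cont : Continuous ρ)
    (hρ_nonneg : ∀ y, 0 ≤ ρ y)
    (hρ_supp : Function.support ρ ⊆ Metric.ball 0 1)
    (hρ_int : ∫ y, ρ y = 1)
    (q p₁ p₂ : ℝ≥0∞) (hq : 1 ≤ q) (hp₁ : 1 ≤ p₁) (hp₂ : 1 ≤ p₂)
    (hpq : 1 / q = 1 / p₁ + 1 / p₂)
    (θ β Nf Ng : ℝ) (hθ : 0 < θ) (hβ : 0 < β) (hNf : 0 ≤ Nf) (hNg : 0 ≤ Ng)
    (f g : EuclideanSpace ℝ (Fin d) → ℝ) (hfm : Measurable f) (hgm : Measurable g)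
    (hf : MemLp f p₁ volume) (hg : MemLp g p₂ volume)
    (hBf : ∀ h : EuclideanSpace ℝ (Fin d), h ≠ 0 →
        eLpNorm (fun x => f (x + h) - f x) p₁ volume ≤ ENNReal.ofReal (‖h‖ ^ θ * Nf))
    (hBg : ∀ h : EuclideanSpace ℝ (Fin d), h ≠ 0 →
        eLpNorm (fun x => g (x + h) - g x) p₂ volume ≤ ENNReal.ofReal (‖h‖ ^ β * Ng))
    (ε : ℝ) (hε : 0 < ε) :
    eLpNorm (fun x => mollify d ρ ε (fun y => f y * g y) x
        - mollify d ρ ε f x * mollify d ρ ε g x) q volume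
      ≤ ENNReal.ofReal (ε ^ (θ + β) * (Nf * Ng)) + ENNReal.ofReal (ε ^ (θ + β) * (Nf * Ng)) := by
  set k : EuclideanSpace ℝ (Fin d) → ℝ := mollKer d ρ ε with hk_def
  have hk_cont : Continuous k := continuous_const.mul (hρ_cont.comp (continuous_const_smul ε⁻¹))
  have hk_nonneg : ∀ y, 0 ≤ k y := fun y => mul_nonneg (Real.rpow_nonneg hε.le _) (hρ_nonneg _)
  have hk_supp : ∀ y, ε ≤ ‖y‖ → k y = 0 := by
    intro y hy
    have h1 : ρ (ε⁻¹ • y) = 0 := by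
      by_contra hcon
      have h2 := hρ_supp (Function.mem_support.mpr hcon)
      rw [Metric.mem_ball, dist_zero_right, norm_smul, Real.norm_eq_abs,
        abs_of_pos (inv_pos.mpr hε)] at h2
      have h3 : (1 : ℝ) ≤ ε⁻¹ * ‖y‖ := by
        have h4 := mul_le_mul_of_nonneg_left hy (le_of_lt (inv_pos.mpr hε))
        rwa [inv_mul_cancel₀ hε.ne'] at h4
      linarith
    simp [hk_def, mollKer, h1]
  have hk_comp : HasCompactSupport k := by
    apply HasCompactSupport.intro (isCompact_closedBall (0 : EuclideanSpace ℝ (Fin d)) ε)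
    intro y hy
    apply hk_supp
    have h1 : ε < ‖y‖ := by
      simpa [Metric.mem_closedBall, dist_zero_right, not_le] using hy
    exact h1.le
  have hk_int : Integrable k volume := hk_cont.integrable_of_hasCompactSupport hk_comp
  have hk_int1 : ∫ y, k y = 1 := by
    have h1 : ∫ y, ρ (ε⁻¹ • y)
        = |((ε⁻¹ ^ Module.finrank ℝ (EuclideanSpace ℝ (Fin d)))⁻¹)| • ∫ y, ρ y :=
      Measure.integral_comp_smul volume ρ ε⁻¹
    rw [hρ_int, finrank_euclideanSpace_fin] at h1
    have h2 : ∫ y, k y = ε ^ (-(d : ℝ)) * (ε ^ d) := by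
      rw [hk_def]
      simp only [mollKer]
      rw [integral_const_mul, h1]
      congr 1
      rw [smul_eq_mul, mul_one, inv_pow, inv_inv, abs_of_pos (pow_pos hε d)]
    rw [h2, Real.rpow_neg hε.le, Real.rpow_natCast]
    exact inv_mul_cancel₀ (pow_ne_zero d hε.ne')
  have hk_lint1 : ∫⁻ y, ENNReal.ofReal (k y) = 1 := by
    rw [← ofReal_integral_eq_lintegral_ofReal hk_int (Eventually.of_forall hk_nonneg), hk_int1,
      ENNReal.ofReal_one]
  set ν : Measure (EuclideanSpace ℝ (Fin d)) :=
    volume.withDensity (fun y => ENNReal.ofReal (k y)) with hν_def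
  have hν_prob : IsProbabilityMeasure ν := by
    constructor
    rw [hν_def, withDensity_apply _ MeasurableSet.univ, setLIntegral_univ]
    exact hk_lint1
  have hν_ball : ∀ᵐ y ∂ν, ‖y‖ < ε := by
    rw [ae_iff]
    have hSm : MeasurableSet {y : EuclideanSpace ℝ (Fin d) | ¬ ‖y‖ < ε} :=
      (measurableSet_lt measurable_norm measurable_const).compl
    rw [hν_def, withDensity_apply _ hSm]
    rw [setLIntegral_congr_fun hSm (fun y hy => by
      rw [hk_supp y (not_lt.mp hy), ENNReal.ofReal_zero])]
    simp
  have hνm : Measurable fun y => Real.toNNReal (k y) := hk_cont.measurable.real_toNNReal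
  have hν_int : ∀ F : EuclideanSpace ℝ (Fin d) → ℝ, ∫ y, F y ∂ν = ∫ y, k y * F y := by
    intro F
    have h1 : ν = volume.withDensity (fun y => (Real.toNNReal (k y) : ℝ≥0∞)) := by
      rw [hν_def]; rfl
    rw [h1, integral_withDensity_eq_integral_smul hνm F]
    congr 1; funext y
    rw [NNReal.smul_def, smul_eq_mul, Real.coe_toNNReal _ (hk_nonneg y)]
  -- mollification as convolution
  have mollify_eq : ∀ φ : EuclideanSpace ℝ (Fin d) → ℝ,
      mollify d ρ ε φ = convolution φ k (ContinuousLinearMap.mul ℝ ℝ) volume := by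
    intro φ; funext x
    show ∫ y, φ (x - y) * k y = _
    rw [show (fun y => φ (x - y) * k y) = fun y => (fun t => φ t * k (x - t)) (x - y) by
      funext y; simp only [sub_sub_cancel]]
    rw [integral_sub_left_eq_self (fun t => φ t * k (x - t)) volume x, convolution_def]
    simp only [ContinuousLinearMap.mul_apply']
  have moll_cont : ∀ φ : EuclideanSpace ℝ (Fin d) → ℝ, LocallyIntegrable φ volume →
      Continuous (mollify d ρ ε φ) := by
    intro φ hφ
    rw [mollify_eq φ]
    exact hk_comp.continuous_convolution_right _ hφ hk_cont
  have moll_intg : ∀ φ : EuclideanSpace ℝ (Fin d) → ℝ, LocallyIntegrable φ volume →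
      ∀ x, Integrable (fun y => φ (x - y) * k y) volume := by
    intro φ hφ x
    have h1 : ConvolutionExistsAt φ k x (ContinuousLinearMap.mul ℝ ℝ) volume :=
      hk_comp.convolutionExists_right (ContinuousLinearMap.mul ℝ ℝ) hφ hk_cont x
    have h2 : Integrable (fun t => φ t * k (x - t)) volume := by
      simpa only [ConvolutionExistsAt, ContinuousLinearMap.mul_apply'] using h1
    have h3 := (integrable_comp_sub_left (fun t => φ t * k (x - t)) x).mpr h2
    simpa only [sub_sub_cancel] using h3
  have hf_loc : LocallyIntegrable f volume := hf.locallyIntegrable hp₁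
  have hg_loc : LocallyIntegrable g volume := hg.locallyIntegrable hp₂
  haveI : ENNReal.HolderTriple p₁ p₂ q := ⟨by simpa only [one_div] using hpq.symm⟩
  have hfg : MemLp (fun y => f y * g y) q volume := by
    have h1 := MeasureTheory.MemLp.smul (φ := f) (r := q) hg hf
    have h2 : f • g = fun y => f y * g y := by funext y; simp [smul_eq_mul]
    rwa [h2] at h1
  have hfg_loc : LocallyIntegrable (fun y => f y * g y) volume := hfg.locallyIntegrable hq
  have I1 : ∀ x, Integrable (fun y => f (x - y) * g (x - y) * k y) volume :=
    fun x => moll_intg _ hfg_loc x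
  have I2 : ∀ x, Integrable (fun y => f (x - y) * k y) volume := fun x => moll_intg f hf_loc x
  have I3 : ∀ x, Integrable (fun y => g (x - y) * k y) volume := fun x => moll_intg g hg_loc x
  -- the commutator identity
  set A : EuclideanSpace ℝ (Fin d) → ℝ :=
    fun x => ∫ y, k y * ((f (x - y) - f x) * (g (x - y) - g x)) with hA_def
  have hA_eq : ∀ x, A x = mollify d ρ ε (fun y => f y * g y) x
      - f x * mollify d ρ ε g x - g x * mollify d ρ ε f x + f x * g x := by
    intro x
    have e1 : (fun y => k y * ((f (x - y) - f x) * (g (x - y) - g x)))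
        = fun y => (f (x - y) * g (x - y) * k y - f x * (g (x - y) * k y))
            - (g x * (f (x - y) * k y) - (f x * g x) * k y) := by
      funext y; ring
    have hmfg : mollify d ρ ε (fun y => f y * g y) x = ∫ y, f (x - y) * g (x - y) * k y := rfl
    have hmf : mollify d ρ ε f x = ∫ y, f (x - y) * k y := rfl
    have hmg : mollify d ρ ε g x = ∫ y, g (x - y) * k y := rfl
    have J2 : Integrable (fun y => f x * (g (x - y) * k y)) volume := (I3 x).const_mul (f x)
    have J3 : Integrable (fun y => g x * (f (x - y) * k y)) volume := (I2 x).const_mul (g x)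
    have J4 : Integrable (fun y => (f x * g x) * k y) volume := hk_int.const_mul (f x * g x)
    have J12 : Integrable (fun y => f (x - y) * g (x - y) * k y
        - f x * (g (x - y) * k y)) volume := (I1 x).sub J2
    have J34 : Integrable (fun y => g x * (f (x - y) * k y)
        - (f x * g x) * k y) volume := J3.sub J4
    rw [hA_def]
    simp only
    rw [e1, integral_sub J12 J34, integral_sub (I1 x) J2, integral_sub J3 J4,
      integral_const_mul, integral_const_mul, integral_const_mul, hk_int1, mul_one,
      hmfg, hmf, hmg]
    ring
  have hD_eq : ∀ (φ : EuclideanSpace ℝ (Fin d) → ℝ),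
      (∀ x, Integrable (fun y => φ (x - y) * k y) volume) →
      ∀ x, (∫ y, k y * (φ (x - y) - φ x)) = mollify d ρ ε φ x - φ x := by
    intro φ hI x
    have e1 : (fun y => k y * (φ (x - y) - φ x)) = fun y => φ (x - y) * k y - φ x * k y := by
      funext y; ring
    have hmφ : mollify d ρ ε φ x = ∫ y, φ (x - y) * k y := rfl
    rw [e1, integral_sub (hI x) (hk_int.const_mul (φ x)), integral_const_mul, hk_int1, mul_one,
      hmφ]
  have main_id : (fun x => mollify d ρ ε (fun y => f y * g y) x
        - mollify d ρ ε f x * mollify d ρ ε g x)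
      = fun x => A x - (mollify d ρ ε f x - f x) * (mollify d ρ ε g x - g x) := by
    funext x
    rw [hA_eq x]; ring
  -- measurability
  have hmf_cont := moll_cont f hf_loc
  have hmg_cont := moll_cont g hg_loc
  have hmfg_cont := moll_cont _ hfg_loc
  have hA_meas : AEStronglyMeasurable A volume := by
    have h1 : A = fun x => mollify d ρ ε (fun y => f y * g y) x
        - f x * mollify d ρ ε g x - g x * mollify d ρ ε f x + f x * g x := funext hA_eq
    rw [h1]
    exact ((((hmfg_cont.measurable).sub (hfm.mul hmg_cont.measurable)).sub
      (hgm.mul hmf_cont.measurable)).add (hfm.mul hgm)).aestronglyMeasurable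
  have hB_meas : AEStronglyMeasurable
      (fun x => (mollify d ρ ε f x - f x) * (mollify d ρ ε g x - g x)) volume :=
    ((hmf_cont.measurable.sub hfm).mul (hmg_cont.measurable.sub hgm)).aestronglyMeasurable
  rw [main_id]
  have hsplit := eLpNorm_sub_le hA_meas hB_meas hq
  refine le_trans (by exact hsplit) (add_le_add ?_ ?_)
  · -- bound on A
    have hA_int : A = fun x => ∫ y, (f (x - y) - f x) * (g (x - y) - g x) ∂ν := by
      funext x
      rw [hν_int fun y => (f (x - y) - f x) * (g (x - y) - g x)]
    rw [hA_int]
    refine mink hq ?_ ?_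
    · exact (((hfm.comp (measurable_fst.sub measurable_snd)).sub (hfm.comp measurable_fst)).mul
        ((hgm.comp (measurable_fst.sub measurable_snd)).sub
          (hgm.comp measurable_fst))).aemeasurable
    · filter_upwards [hν_ball] with y hy
      by_cases hy0 : y = 0
      · subst hy0
        simp only [sub_zero, sub_self, zero_mul]
        rw [eLpNorm_zero']
        exact zero_le
      · have hδf : eLpNorm (fun x => f (x - y) - f x) p₁ volume
            ≤ ENNReal.ofReal (‖y‖ ^ θ * Nf) := by
          have h1 := hBf (-y) (neg_ne_zero.mpr hy0)
          simpa [sub_eq_add_neg] using h1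
        have hδg : eLpNorm (fun x => g (x - y) - g x) p₂ volume
            ≤ ENNReal.ofReal (‖y‖ ^ β * Ng) := by
          have h1 := hBg (-y) (neg_ne_zero.mpr hy0)
          simpa [sub_eq_add_neg] using h1
        have hHolder := eLpNorm_smul_le_mul_eLpNorm (μ := (volume : Measure (EuclideanSpace ℝ (Fin d)))) (p := p₁) (q := p₂) (r := q)
          (f := fun x => g (x - y) - g x)
          ((hgm.comp (measurable_sub_const y)).sub hgm).aestronglyMeasurable
          (φ := fun x => f (x - y) - f x)
          ((hfm.comp (measurable_sub_const y)).sub hfm).aestronglyMeasurable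
        have heq : (fun x => f (x - y) - f x) • (fun x => g (x - y) - g x)
            = fun x => (f (x - y) - f x) * (g (x - y) - g x) := by
          funext x; simp [smul_eq_mul]
        rw [heq] at hHolder
        refine hHolder.trans ((mul_le_mul' hδf hδg).trans ?_)
        rw [← ENNReal.ofReal_mul (by positivity)]
        apply ENNReal.ofReal_le_ofReal
        have hny : 0 < ‖y‖ := norm_pos_iff.mpr hy0
        calc ‖y‖ ^ θ * Nf * (‖y‖ ^ β * Ng) = ‖y‖ ^ (θ + β) * (Nf * Ng) := by
              rw [Real.rpow_add hny]; ring
        _ ≤ ε ^ (θ + β) * (Nf * Ng) := by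
            apply mul_le_mul_of_nonneg_right _ (by positivity)
            exact Real.rpow_le_rpow (norm_nonneg y) hy.le (by positivity)
  · -- bound on B
    have hDf : (fun x => mollify d ρ ε f x - f x) = fun x => ∫ y, (f (x - y) - f x) ∂ν := by
      funext x
      rw [hν_int fun y => f (x - y) - f x, hD_eq f (moll_intg f hf_loc) x]
    have hDg : (fun x => mollify d ρ ε g x - g x) = fun x => ∫ y, (g (x - y) - g x) ∂ν := by
      funext x
      rw [hν_int fun y => g (x - y) - g x, hD_eq g (moll_intg g hg_loc) x]
    have bf : eLpNorm (fun x => mollify d ρ ε f x - f x) p₁ volume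
        ≤ ENNReal.ofReal (ε ^ θ * Nf) := by
      rw [hDf]
      refine mink hp₁ ?_ ?_
      · exact ((hfm.comp (measurable_fst.sub measurable_snd)).sub
          (hfm.comp measurable_fst)).aemeasurable
      · filter_upwards [hν_ball] with y hy
        by_cases hy0 : y = 0
        · subst hy0
          simp only [sub_zero, sub_self]
          rw [eLpNorm_zero']
          exact zero_le
        · have h1 := hBf (-y) (neg_ne_zero.mpr hy0)
          have h2 : eLpNorm (fun x => f (x - y) - f x) p₁ volume
              ≤ ENNReal.ofReal (‖y‖ ^ θ * Nf) := by simpa [sub_eq_add_neg] using h1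
          refine h2.trans (ENNReal.ofReal_le_ofReal ?_)
          apply mul_le_mul_of_nonneg_right _ hNf
          exact Real.rpow_le_rpow (norm_nonneg y) hy.le hθ.le
    have bg : eLpNorm (fun x => mollify d ρ ε g x - g x) p₂ volume
        ≤ ENNReal.ofReal (ε ^ β * Ng) := by
      rw [hDg]
      refine mink hp₂ ?_ ?_
      · exact ((hgm.comp (measurable_fst.sub measurable_snd)).sub
          (hgm.comp measurable_fst)).aemeasurable
      · filter_upwards [hν_ball] with y hy
        by_cases hy0 : y = 0
        · subst hy0
          simp only [sub_zero, sub_self]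
          rw [eLpNorm_zero']
          exact zero_le
        · have h1 := hBg (-y) (neg_ne_zero.mpr hy0)
          have h2 : eLpNorm (fun x => g (x - y) - g x) p₂ volume
              ≤ ENNReal.ofReal (‖y‖ ^ β * Ng) := by simpa [sub_eq_add_neg] using h1
          refine h2.trans (ENNReal.ofReal_le_ofReal ?_)
          apply mul_le_mul_of_nonneg_right _ hNg
          exact Real.rpow_le_rpow (norm_nonneg y) hy.le hβ.le
    have hHolder := eLpNorm_smul_le_mul_eLpNorm (μ := (volume : Measure (EuclideanSpace ℝ (Fin d)))) (p := p₁) (q := p₂) (r := q)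
      (f := fun x => mollify d ρ ε g x - g x)
      (hmg_cont.measurable.sub hgm).aestronglyMeasurable
      (φ := fun x => mollify d ρ ε f x - f x)
      (hmf_cont.measurable.sub hfm).aestronglyMeasurable
    have heq : (fun x => mollify d ρ ε f x - f x) • (fun x => mollify d ρ ε g x - g x)
        = fun x => (mollify d ρ ε f x - f x) * (mollify d ρ ε g x - g x) := by
      funext x; simp [smul_eq_mul]
    rw [heq] at hHolder
    refine hHolder.trans ((mul_le_mul' bf bg).trans (le_of_eq ?_))
    rw [← ENNReal.ofReal_mul (by positivity)]
    congr 1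
    rw [Real.rpow_add hε]; ring

/-- the Constantin–E–Titi commutator estimate
`‖(fg)_ε − f_ε g_ε‖_{L^q} ≤ C ε^{θ+β} [f]_{B^θ_{rq,∞}} [g]_{B^β_{r'q,∞}}`
for Hölder-conjugate `r, r'` with `rq, r'q ≥ 1`. -/
theorem stmt2 (d : ℕ) (ρ : EuclideanSpace ℝ (Fin d) → ℝ)
    (hρ_smooth : ContDiff ℝ (⊤ : ℕ∞) ρ)
    (hρ_nonneg : ∀ y, 0 ≤ ρ y)
    (hρ_supp : Function.support ρ ⊆ Metric.ball 0 1)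
    (hρ_int : ∫ y, ρ y = 1)
    (q r r' : ℝ≥0∞) (hq : 1 ≤ q) (hr : 1 ≤ r)
    (hrr' : 1 / r + 1 / r' = 1) (hrq : 1 ≤ r * q) (hr'q : 1 ≤ r' * q)
    (θ β : ℝ) (hθ : θ ∈ Ioo (0:ℝ) 1) (hβ : β ∈ Ioo (0:ℝ) 1) :
    ∃ C > 0, ∀ (f g : EuclideanSpace ℝ (Fin d) → ℝ) (Nf Ng : ℝ), 0 ≤ Nf → 0 ≤ Ng →
      MemLp f (r * q) volume → MemLp g (r' * q) volume →
      (∀ h : EuclideanSpace ℝ (Fin d), h ≠ 0 →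
        eLpNorm (fun x => f (x + h) - f x) (r * q) volume ≤ ENNReal.ofReal (‖h‖ ^ θ * Nf)) →
      (∀ h : EuclideanSpace ℝ (Fin d), h ≠ 0 →
        eLpNorm (fun x => g (x + h) - g x) (r' * q) volume ≤ ENNReal.ofReal (‖h‖ ^ β * Ng)) →
      ∀ ε : ℝ, 0 < ε →
        eLpNorm (fun x => mollify d ρ ε (fun y => f y * g y) x
            - mollify d ρ ε f x * mollify d ρ ε g x) q volume
          ≤ ENNReal.ofReal (C * ε ^ (θ + β) * Nf * Ng) := by
  obtain ⟨hθ0, hθ1⟩ := hθ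
  obtain ⟨hβ0, hβ1⟩ := hβ
  refine ⟨2, two_pos, ?_⟩
  intro f g Nf Ng hNf hNg hf hg hBf hBg ε hε
  have hq0 : q ≠ 0 := (zero_lt_one.trans_le hq).ne'
  have hr0 : r ≠ 0 := (zero_lt_one.trans_le hr).ne'
  have hr'1 : (1 : ℝ≥0∞) ≤ r' := by
    have h1 : 1 / r' ≤ 1 := le_of_le_of_eq le_add_self hrr' 
    rwa [one_div, ENNReal.inv_le_one] at h1
  have hr'0 : r' ≠ 0 := (zero_lt_one.trans_le hr'1).ne'
  have hpq : 1 / q = 1 / (r * q) + 1 / (r' * q) := by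
    rw [one_div, one_div, one_div, ENNReal.mul_inv (Or.inl hr0) (Or.inr hq0),
      ENNReal.mul_inv (Or.inl hr'0) (Or.inr hq0), ← add_mul]
    rw [one_div, one_div] at hrr'
    rw [hrr', one_mul]
  -- measurable representatives
  set f' := hf.1.mk f with hf'_def
  have hf'sm : StronglyMeasurable f' := hf.1.stronglyMeasurable_mk
  have hff' : f =ᵐ[volume] f' := hf.1.ae_eq_mk
  set g' := hg.1.mk g with hg'_def
  have hg'sm : StronglyMeasurable g' := hg.1.stronglyMeasurable_mk
  have hgg' : g =ᵐ[volume] g' := hg.1.ae_eq_mk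
  have hmoll : ∀ φ φ' : EuclideanSpace ℝ (Fin d) → ℝ, φ =ᵐ[volume] φ' →
      ∀ x, mollify d ρ ε φ x = mollify d ρ ε φ' x := by
    intro φ φ' hφ x
    apply integral_congr_ae
    have h1 : (φ ∘ fun y => x - y) =ᵐ[volume] (φ' ∘ fun y => x - y) :=
      (Measure.measurePreserving_sub_left volume x).quasiMeasurePreserving.ae_eq_comp hφ
    filter_upwards [h1] with y hy
    simp only [Function.comp_apply] at hy
    rw [hy]
  have hLHS : (fun x => mollify d ρ ε (fun y => f y * g y) x
        - mollify d ρ ε f x * mollify d ρ ε g x)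
      = fun x => mollify d ρ ε (fun y => f' y * g' y) x
        - mollify d ρ ε f' x * mollify d ρ ε g' x := by
    funext x
    rw [hmoll f f' hff' x, hmoll g g' hgg' x,
      hmoll (fun y => f y * g y) (fun y => f' y * g' y) (hff'.mul hgg') x]
  rw [hLHS]
  have hBf' : ∀ h : EuclideanSpace ℝ (Fin d), h ≠ 0 →
      eLpNorm (fun x => f' (x + h) - f' x) (r * q) volume
        ≤ ENNReal.ofReal (‖h‖ ^ θ * Nf) := by
    intro h hh
    have h2 : (f' ∘ fun x => x + h) =ᵐ[volume] (f ∘ fun x => x + h) :=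
      (measurePreserving_add_right volume h).quasiMeasurePreserving.ae_eq_comp hff'.symm
    have h1 : (fun x => f' (x + h) - f' x) =ᵐ[volume] fun x => f (x + h) - f x := by
      filter_upwards [h2, hff'.symm] with x hx1 hx2
      simp only [Function.comp_apply] at hx1
      rw [hx1, hx2]
    rw [eLpNorm_congr_ae h1]
    exact hBf h hh
  have hBg' : ∀ h : EuclideanSpace ℝ (Fin d), h ≠ 0 →
      eLpNorm (fun x => g' (x + h) - g' x) (r' * q) volume
        ≤ ENNReal.ofReal (‖h‖ ^ β * Ng) := by
    intro h hh
    have h2 : (g' ∘ fun x => x + h) =ᵐ[volume] (g ∘ fun x => x + h) :=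
      (measurePreserving_add_right volume h).quasiMeasurePreserving.ae_eq_comp hgg'.symm
    have h1 : (fun x => g' (x + h) - g' x) =ᵐ[volume] fun x => g (x + h) - g x := by
      filter_upwards [h2, hgg'.symm] with x hx1 hx2
      simp only [Function.comp_apply] at hx1
      rw [hx1, hx2]
    rw [eLpNorm_congr_ae h1]
    exact hBg h hh
  have key := coreCET d ρ hρ_smooth.continuous hρ_nonneg hρ_supp hρ_int q (r * q) (r' * q)
    hq hrq hr'q hpq θ β Nf Ng hθ0 hβ0 hNf hNg f' g' hf'sm.measurable hg'sm.measurable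
    (hf.ae_eq hff') (hg.ae_eq hgg') hBf' hBg' ε hε
  refine key.trans (le_of_eq ?_)
  rw [← ENNReal.ofReal_add (by positivity) (by positivity)]
  congr 1
  ring
end
end

section
/- Let S̃ ⊂ 𝕋^d satisfy H^d((S̃)_δ) ≤ C δ^{d−γ} for all small δ > 0 (upper Minkowski dimension at most γ), and let U ∈ L^∞((0,T); Lip(𝕋^d)) with flow φ^U. Then the space–time set S = {(φ^U(x,t), t) : x ∈ S̃, t ∈ (0,T)} satisfies H^{d+1}((S)_{δ,δ}) ≤ C' δ^{d−γ} for all small δ > 0, i.e. S has Eulerian time-stable Minkowski dimension at most γ with instability parameter β = 1, with C' depending on T, ‖U‖_{L^∞_{x,t}}, ‖∇U‖_{L^∞_{x,t}} and C. -/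
open MeasureTheory Set
open scoped ENNReal NNReal Topology

noncomputable section

/-- the image in space–time of a set `S̃` of upper Minkowski dimension
at most `γ` under the flow of a bounded, Lipschitz vector field `U` has Eulerian
time-stable Minkowski dimension at most `γ` with instability parameter `β = 1`. -/
theorem stmt16 (d : ℕ) (T γ C K δ₀ : ℝ) (L : ℝ≥0)
    (hT : 0 < T) (hγ0 : 0 ≤ γ) (hγd : γ ≤ d) (hC : 0 < C) (hK : 0 ≤ K) (hδ₀ : 0 < δ₀)
    (St : Set (EuclideanSpace ℝ (Fin d)))
    (hdim : ∀ δ ∈ Ioo (0:ℝ) δ₀,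
      volume {x : EuclideanSpace ℝ (Fin d) | ∃ y ∈ St, ‖x - y‖ < δ}
        ≤ ENNReal.ofReal (C * δ ^ ((d : ℝ) - γ)))
    (U : EuclideanSpace ℝ (Fin d) → ℝ → EuclideanSpace ℝ (Fin d))
    (hUb : ∀ x t, ‖U x t‖ ≤ K)
    (hUlip : ∀ t : ℝ, LipschitzWith L (fun x => U x t))
    (φ : EuclideanSpace ℝ (Fin d) → ℝ → EuclideanSpace ℝ (Fin d))
    (hφ0 : ∀ x, φ x 0 = x)
    (hφ : ∀ x t, HasDerivAt (φ x) (U (φ x t) t) t) :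
    ∃ C' > 0, ∃ δ₁ > 0, ∀ δ ∈ Ioo (0:ℝ) δ₁,
      volume {z : EuclideanSpace ℝ (Fin d) × ℝ |
          ∃ x ∈ St, ∃ t ∈ Ioo (0:ℝ) T, ‖z.1 - φ x t‖ < δ ∧ |z.2 - t| < δ}
        ≤ ENNReal.ofReal (C' * δ ^ ((d : ℝ) - γ)) := by
  classical
  have hL : (0:ℝ) ≤ L := L.coe_nonneg
  set e : ℝ := Real.exp ((L : ℝ) * T) with he
  have hepos : 0 < e := Real.exp_pos _
  set M : ℝ := 1 + e + K with hM
  have hMpos : 0 < M := by positivity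
  set B := volume (Metric.ball (0 : EuclideanSpace ℝ (Fin d)) 1) with hB
  have hBpos : 0 < B := Metric.measure_ball_pos _ _ one_pos
  have hBlt : B < ⊤ := measure_ball_lt_top
  set b := B.toReal with hb
  have hbpos : 0 < b := ENNReal.toReal_pos hBpos.ne' hBlt.ne
  have hBeq : B = ENNReal.ofReal b := (ENNReal.ofReal_toReal hBlt.ne).symm
  refine ⟨C * (2*M)^d * (4*T+4), by positivity, min δ₀ 1, by positivity, ?_⟩
  intro δ hδ
  have hδ0 : 0 < δ := hδ.1
  have hδδ₀ : δ < δ₀ := lt_of_lt_of_le hδ.2 (min_le_left _ _)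
  have hδ1 : δ < 1 := lt_of_lt_of_le hδ.2 (min_le_right _ _)
  -- Grönwall estimate for the flow
  have gron : ∀ x y, ∀ t ∈ Icc (0:ℝ) T,
      dist (φ x t) (φ y t) ≤ dist x y * e := by
    intro x y t ht
    have h := dist_le_of_trajectories_ODE (v := fun s z => U z s) (K := L) (a := 0) (b := T)
      (f := φ x) (g := φ y) (δ := dist x y) (fun s => hUlip s)
      (fun s _ => (hφ x s).continuousAt.continuousWithinAt)
      (fun s _ => (hφ x s).hasDerivWithinAt)
      (fun s _ => (hφ y s).continuousAt.continuousWithinAt)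
      (fun s _ => (hφ y s).hasDerivWithinAt)
      (by rw [hφ0, hφ0]) t ht
    calc dist (φ x t) (φ y t) ≤ dist x y * Real.exp ((L:ℝ) * (t - 0)) := h
      _ ≤ dist x y * e := by
          apply mul_le_mul_of_nonneg_left _ dist_nonneg
          exact Real.exp_le_exp.2 (by nlinarith [ht.2])
  -- drift in time
  have driftK : ∀ (x : EuclideanSpace ℝ (Fin d)) (s t : ℝ),
      ‖φ x t - φ x s‖ ≤ K * |t - s| := by
    intro x s t
    have := convex_univ.norm_image_sub_le_of_norm_hasDerivWithin_le
      (f := φ x) (f' := fun u => U (φ x u) u) (C := K)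
      (fun u _ => (hφ x u).hasDerivWithinAt) (fun u _ => hUb _ _) (mem_univ s) (mem_univ t)
    simpa [Real.norm_eq_abs] using this
  -- maximal δ-separated subset of St
  obtain ⟨P, hPS, hPsep, hPnet⟩ :
      ∃ P ⊆ St, (P.Pairwise fun p q => δ ≤ dist p q) ∧ ∀ x ∈ St, ∃ p ∈ P, dist x p < δ := by
    set SS : Set (Set (EuclideanSpace ℝ (Fin d))) :=
      {Q | Q ⊆ St ∧ Q.Pairwise fun p q => δ ≤ dist p q} with hSS
    have hub : ∀ c ⊆ SS, IsChain (· ⊆ ·) c → ∃ ub ∈ SS, ∀ s ∈ c, s ⊆ ub := by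
      intro c hc hchain
      refine ⟨⋃₀ c, ⟨sUnion_subset fun s hs => (hc hs).1, ?_⟩, fun s hs => subset_sUnion_of_mem hs⟩
      intro p hp q hq hpq
      obtain ⟨s, hs, hps⟩ := hp
      obtain ⟨s', hs', hqs⟩ := hq
      rcases hchain.total hs hs' with hss | hss
      · exact (hc hs').2 (hss hps) hqs hpq
      · exact (hc hs).2 hps (hss hqs) hpq
    obtain ⟨P, hmax⟩ := zorn_subset SS hub
    refine ⟨P, hmax.prop.1, hmax.prop.2, ?_⟩
    intro x hx
    by_contra h
    push_neg at h
    have hins : insert x P ∈ SS :=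
      ⟨insert_subset hx hmax.prop.1, (Set.pairwise_insert (r := fun p q => δ ≤ dist p q)).2
        ⟨hmax.prop.2, fun q hq _ => ⟨h q hq, by rw [dist_comm]; exact h q hq⟩⟩⟩
    have hsub : insert x P ⊆ P := hmax.2 hins (subset_insert x P)
    have hxx : δ ≤ dist x x := h x (hsub (mem_insert x P))
    rw [dist_self] at hxx; linarith
  set A₀ := ENNReal.ofReal (C * δ ^ ((d:ℝ) - γ)) with hA₀
  have hA₀top : A₀ ≠ ⊤ := ENNReal.ofReal_ne_top
  set v : ℝ≥0∞ := ENNReal.ofReal ((δ/2)^d * b) with hv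
  have hv0 : v ≠ 0 := by
    rw [hv]
    simp only [ne_eq, ENNReal.ofReal_eq_zero, not_le]
    positivity
  have hvtop : v ≠ ⊤ := ENNReal.ofReal_ne_top
  -- counting: any finite subset of P has bounded cardinality
  have key : ∀ F : Finset (EuclideanSpace ℝ (Fin d)), ↑F ⊆ P →
      (F.card : ℝ≥0∞) * v ≤ A₀ := by
    intro F hF
    have hdisj : (↑F : Set (EuclideanSpace ℝ (Fin d))).PairwiseDisjoint
        (fun p => Metric.ball p (δ/2)) := by
      intro p hp q hq hpq
      have := hPsep (hF hp) (hF hq) hpq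
      exact Metric.ball_disjoint_ball (by linarith)
    have hvol : ∀ p : EuclideanSpace ℝ (Fin d),
        volume (Metric.ball p (δ/2)) = v := by
      intro p
      rw [Measure.addHaar_ball_of_pos volume p (by positivity : (0:ℝ) < δ/2),
        finrank_euclideanSpace_fin, ← hB, hBeq, hv,
        ENNReal.ofReal_mul (by positivity)]
    calc (F.card : ℝ≥0∞) * v
        = ∑ _p ∈ F, v := by rw [Finset.sum_const, nsmul_eq_mul]
      _ = ∑ p ∈ F, volume (Metric.ball p (δ/2)) := by
          exact Finset.sum_congr rfl fun p _ => (hvol p).symm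
      _ = volume (⋃ p ∈ F, Metric.ball p (δ/2)) :=
          (measure_biUnion_finset hdisj fun p _ => measurableSet_ball).symm
      _ ≤ volume {x : EuclideanSpace ℝ (Fin d) | ∃ y ∈ St, ‖x - y‖ < δ} := by
          apply measure_mono
          intro z hz
          simp only [mem_iUnion, Metric.mem_ball, exists_prop] at hz
          obtain ⟨p, hp, hzp⟩ := hz
          exact ⟨p, hPS (hF hp), by rw [← dist_eq_norm]; linarith⟩
      _ ≤ A₀ := hdim δ ⟨hδ0, hδδ₀⟩
  have hPfin : P.Finite := by
    by_contra hinf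
    obtain ⟨n, hn⟩ := ENNReal.exists_nat_gt (ENNReal.div_lt_top hA₀top hv0).ne
    obtain ⟨F, hFP, hFcard⟩ := Set.Infinite.exists_subset_card_eq hinf n
    have hle := key F hFP
    rw [hFcard] at hle
    have hlt : A₀ < n * v := by
      rwa [ENNReal.div_lt_iff (Or.inl hv0) (Or.inl hvtop)] at hn
    exact absurd hle (not_le.2 hlt)
  set N := hPfin.toFinset.card with hN
  have hNb : (N:ℝ) * ((δ/2)^d * b) ≤ C * δ ^ ((d:ℝ) - γ) := by
    have hkey := key hPfin.toFinset (by simp)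
    rw [hv, ← ENNReal.ofReal_natCast, ← ENNReal.ofReal_mul (Nat.cast_nonneg _)] at hkey
    exact (ENNReal.ofReal_le_ofReal_iff (by positivity)).1 hkey
  -- time grid
  set n := ⌈T / δ⌉₊ with hn
  have hgrid : ∀ t ∈ Ioo (0:ℝ) T, ∃ j < n, |t - j * δ| < δ := by
    intro t ht
    refine ⟨⌊t / δ⌋₊, ?_, ?_⟩
    · have h1 : (⌊t/δ⌋₊ : ℝ) ≤ t / δ := Nat.floor_le (div_nonneg ht.1.le hδ0.le)
      have h2 : t / δ < (n:ℝ) := by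
        refine lt_of_lt_of_le ?_ (Nat.le_ceil _)
        gcongr
        exact ht.2
      exact_mod_cast h1.trans_lt h2
    · have h1 : (⌊t/δ⌋₊ : ℝ) * δ ≤ t := by
        rw [← le_div_iff₀ hδ0]
        exact Nat.floor_le (div_nonneg ht.1.le hδ0.le)
      have h2 : t < ((⌊t/δ⌋₊ : ℝ) + 1) * δ := by
        rw [← div_lt_iff₀ hδ0]
        exact Nat.lt_floor_add_one _
      rw [abs_lt]
      constructor <;> nlinarith
  have hnδ : (n:ℝ) * δ ≤ T + δ := by
    have h1 : (n:ℝ) < T / δ + 1 := Nat.ceil_lt_add_one (by positivity)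
    have h2 : (T/δ) * δ = T := div_mul_cancel₀ T hδ0.ne'
    nlinarith
  -- covering
  set G : EuclideanSpace ℝ (Fin d) → ℕ → Set (EuclideanSpace ℝ (Fin d) × ℝ) :=
    fun p j => (Metric.ball (φ p ((j:ℝ)*δ)) (M*δ)) ×ˢ
      (Ioo ((j:ℝ)*δ - 2*δ) ((j:ℝ)*δ + 2*δ)) with hG
  have hcov : {z : EuclideanSpace ℝ (Fin d) × ℝ |
      ∃ x ∈ St, ∃ t ∈ Ioo (0:ℝ) T, ‖z.1 - φ x t‖ < δ ∧ |z.2 - t| < δ} ⊆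
      ⋃ p ∈ hPfin.toFinset, ⋃ j ∈ Finset.range n, G p j := by
    rintro ⟨z1, z2⟩ ⟨x, hx, t, ht, hz1, hz2⟩
    obtain ⟨p, hp, hxp⟩ := hPnet x hx
    obtain ⟨j, hjn, hjt⟩ := hgrid t ht
    refine mem_iUnion₂.2 ⟨p, hPfin.mem_toFinset.2 hp, mem_iUnion₂.2
      ⟨j, Finset.mem_range.2 hjn, ?_, ?_⟩⟩
    · -- spatial component
      have h1 : dist z1 (φ x t) < δ := by rw [dist_eq_norm]; exact hz1
      have h2 : dist (φ x t) (φ p t) ≤ dist x p * e :=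
        gron x p t ⟨ht.1.le, ht.2.le⟩
      have h3 : dist (φ p t) (φ p ((j:ℝ)*δ)) ≤ K * δ := by
        rw [dist_eq_norm]
        calc ‖φ p t - φ p ((j:ℝ)*δ)‖ ≤ K * |t - (j:ℝ)*δ| := driftK p _ t
          _ ≤ K * δ := mul_le_mul_of_nonneg_left hjt.le hK
      have h2' : dist (φ x t) (φ p t) ≤ δ * e := by
        refine h2.trans (mul_le_mul_of_nonneg_right hxp.le hepos.le)
      have htri := dist_triangle4 z1 (φ x t) (φ p t) (φ p ((j:ℝ)*δ))
      have hMδ : M * δ = δ + δ * e + K * δ := by rw [hM]; ring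
      simp only [Metric.mem_ball]
      linarith
    · -- time component
      have habs : |z2 - (j:ℝ)*δ| ≤ |z2 - t| + |t - (j:ℝ)*δ| := abs_sub_le _ _ _
      have : |z2 - (j:ℝ)*δ| < 2*δ := by linarith
      rw [abs_lt] at this
      exact ⟨by linarith [this.1], by linarith [this.2]⟩
  -- volume of each box
  have hGv : ∀ (p : EuclideanSpace ℝ (Fin d)) (j : ℕ),
      volume (G p j) = ENNReal.ofReal ((M*δ)^d * b * (4*δ)) := by
    intro p j
    rw [hG]
    dsimp only
    rw [show volume ((Metric.ball (φ p ((j:ℝ)*δ)) (M*δ)) ×ˢ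
        (Ioo ((j:ℝ)*δ - 2*δ) ((j:ℝ)*δ + 2*δ)))
      = volume (Metric.ball (φ p ((j:ℝ)*δ)) (M*δ)) *
        volume (Ioo ((j:ℝ)*δ - 2*δ) ((j:ℝ)*δ + 2*δ)) from
      MeasureTheory.Measure.prod_prod _ _]
    rw [Measure.addHaar_ball_of_pos volume _ (by positivity : (0:ℝ) < M*δ),
      finrank_euclideanSpace_fin, ← hB, hBeq, Real.volume_Ioo,
      show ((j:ℝ)*δ + 2*δ - ((j:ℝ)*δ - 2*δ)) = 4*δ by ring,
      ← ENNReal.ofReal_mul (by positivity), ← ENNReal.ofReal_mul (by positivity)]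
  -- final computation
  calc volume {z : EuclideanSpace ℝ (Fin d) × ℝ |
          ∃ x ∈ St, ∃ t ∈ Ioo (0:ℝ) T, ‖z.1 - φ x t‖ < δ ∧ |z.2 - t| < δ}
      ≤ volume (⋃ p ∈ hPfin.toFinset, ⋃ j ∈ Finset.range n, G p j) := measure_mono hcov
    _ ≤ ∑ p ∈ hPfin.toFinset, ∑ j ∈ Finset.range n, volume (G p j) := by
        refine (measure_biUnion_finset_le _ _).trans ?_
        exact Finset.sum_le_sum fun p _ => measure_biUnion_finset_le _ _
    _ = ((N * n : ℕ) : ℝ≥0∞) * ENNReal.ofReal ((M*δ)^d * b * (4*δ)) := by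
        simp only [hGv, Finset.sum_const, Finset.card_range, nsmul_eq_mul, ← hN]
        push_cast
        ring
    _ ≤ ENNReal.ofReal (C * (2*M)^d * (4*T+4) * δ ^ ((d:ℝ) - γ)) := by
        rw [← ENNReal.ofReal_natCast, ← ENNReal.ofReal_mul (Nat.cast_nonneg _)]
        apply ENNReal.ofReal_le_ofReal
        have key2 : (n:ℝ) * (4*δ) ≤ 4*T + 4 := by nlinarith
        have hpow : (M*δ)^d = (2*M)^d * (δ/2)^d := by
          rw [← mul_pow, show (2*M)*(δ/2) = M*δ by ring]
        calc ((N*n : ℕ):ℝ) * ((M*δ)^d * b * (4*δ))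
            = ((2*M)^d) * ((N:ℝ) * ((δ/2)^d * b)) * ((n:ℝ)*(4*δ)) := by
              push_cast; rw [hpow]; ring
          _ ≤ ((2*M)^d) * (C * δ ^ ((d:ℝ) - γ)) * (4*T+4) := by
              apply mul_le_mul (mul_le_mul_of_nonneg_left hNb (by positivity)) key2
                (by positivity) (by positivity)
          _ = C * (2*M)^d * (4*T+4) * δ ^ ((d:ℝ) - γ) := by ring
end
end
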